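/- Failure of factorization without local embedding: let X, Y be Banach function spaces over ℝⁿ such that Y is NOT locally embedded into X. Then the functional ‖f‖_Z := sup{‖f·g‖_X : ‖g‖_Y ≤ 1} is not a Banach function norm; more precisely, there exists a measurable set E of finite measure with ‖χ_E‖_Z = ∞. -/

import Mathlib

open MeasureTheory Set Filter

noncomputable section

/-- A (rearrangement-invariant) Banach function norm over `ℝⁿ` with Lebesgue measure. -/
structure BFNorm (n : ℕ) where
  /-- The norm functional. -/
  ρ : ((Fin n → ℝ) → ℝ) → ENNReal
  /-- Lattice (monotonicity) property. -/
  mono : ∀ f g : (Fin n → ℝ) → ℝ,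
    (∀ᵐ x ∂MeasureTheory.volume, |f x| ≤ |g x|) → ρ f ≤ ρ g
  /-- Homogeneity. -/
  smul : ∀ (c : ℝ) (f : (Fin n → ℝ) → ℝ),
    ρ (fun x => c * f x) = ENNReal.ofReal |c| * ρ f
  /-- Triangle inequality. -/
  add : ∀ f g : (Fin n → ℝ) → ℝ, ρ (fun x => f x + g x) ≤ ρ f + ρ g
  /-- Nondegeneracy. -/
  pos : ∀ f : (Fin n → ℝ) → ℝ, ρ f = 0 → ∀ᵐ x ∂MeasureTheory.volume, f x = 0
  /-- Characteristic functions of sets of finite measure have finite norm. -/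
  chiFin : ∀ E : Set (Fin n → ℝ), MeasurableSet E → MeasureTheory.volume E < ⊤ →
    ρ (E.indicator (fun _ => (1:ℝ))) < ⊤
  /-- Fatou property. -/
  fatou : ∀ (f : ℕ → (Fin n → ℝ) → ℝ) (g : (Fin n → ℝ) → ℝ),
    (∀ i, ∀ᵐ x ∂MeasureTheory.volume, 0 ≤ f i x ∧ f i x ≤ f (i+1) x) →
    (∀ᵐ x ∂MeasureTheory.volume, Filter.Tendsto (fun i => f i x) Filter.atTop (nhds (g x))) →
    ρ g = ⨆ i, ρ (f i)

/-- Rearrangement invariance: equimeasurable functions have equal norm. -/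
def BFNorm.RearrInv {n : ℕ} (X : BFNorm n) : Prop :=
  ∀ f g : (Fin n → ℝ) → ℝ,
    (∀ s : ℝ, 0 < s →
      MeasureTheory.volume {x | s < |f x|} = MeasureTheory.volume {x | s < |g x|}) →
    X.ρ f = X.ρ g

/-- `Y` is locally embedded into `X`. -/
def LocEmb {n : ℕ} (Y X : BFNorm n) : Prop :=
  ∀ E : Set (Fin n → ℝ), MeasurableSet E → MeasureTheory.volume E < ⊤ →
    ∃ C : ENNReal, C ≠ ⊤ ∧ ∀ u : (Fin n → ℝ) → ℝ,
      X.ρ (E.indicator u) ≤ C * Y.ρ (E.indicator u)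

/-- The multiplier norm `‖f‖_{Y^X} = sup{‖f·g‖_X : ‖g‖_Y ≤ 1}`. -/
noncomputable def multNorm {n : ℕ} (X Y : BFNorm n) (f : (Fin n → ℝ) → ℝ) : ENNReal :=
  ⨆ (g : (Fin n → ℝ) → ℝ) (_ : Y.ρ g ≤ 1), X.ρ (fun x => f x * g x)

/-- Failure of the factorization without the local embedding: if `Y` is not locally
embedded into `X`, then the multiplier functional is infinite on some characteristic
function of a set of finite measure, hence is not a Banach function norm. -/
lemma BFNorm.rho_zero {n : ℕ} (X : BFNorm n) : X.ρ (fun _ => 0) = 0 := by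
  have := X.smul 0 (fun _ => 0)
  simpa using this

theorem stmt19 (n : ℕ) (X Y : BFNorm n) (hloc : ¬ LocEmb Y X) :
    ∃ E : Set (Fin n → ℝ), MeasurableSet E ∧ volume E < ⊤ ∧
      multNorm X Y (E.indicator (fun _ => (1:ℝ))) = ⊤ := by
  rw [LocEmb] at hloc
  push_neg at hloc
  obtain ⟨E, hE, hEvol, hfail⟩ := hloc
  refine ⟨E, hE, hEvol, ENNReal.eq_top_of_forall_nnreal_le fun r => ?_⟩
  obtain ⟨u, hu⟩ := hfail (↑r + 1) (by simp)
  set v := E.indicator u with hv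
  set a := Y.ρ v with ha
  set b := X.ρ v with hb
  -- a ≠ 0
  have ha0 : a ≠ 0 := by
    intro h0
    have hvz : ∀ᵐ x ∂volume, v x = 0 := Y.pos v h0
    have : b ≤ X.ρ (fun _ => 0) := X.mono v (fun _ => 0) (by filter_upwards [hvz] with x hx; simp [hx])
    rw [X.rho_zero] at this
    have : b = 0 := le_antisymm this zero_le
    rw [h0, this] at hu
    simp at hu
  -- a ≠ ⊤
  have hat : a ≠ ⊤ := by
    intro ht
    rw [ht, ENNReal.mul_top (by simp)] at hu
    exact (not_top_lt hu)
  set s := a.toReal with hs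
  have hspos : 0 < s := ENNReal.toReal_pos ha0 hat
  have hofs : ENNReal.ofReal s = a := ENNReal.ofReal_toReal hat
  set g : (Fin n → ℝ) → ℝ := fun x => s⁻¹ * v x with hg
  have hinv : ENNReal.ofReal s⁻¹ = a⁻¹ := by
    rw [ENNReal.ofReal_inv_of_pos hspos, hofs]
  have hYg : Y.ρ g = 1 := by
    rw [hg, Y.smul, abs_of_pos (inv_pos.mpr hspos), hinv, ← ha, ENNReal.inv_mul_cancel ha0 hat]
  have hXg : X.ρ g = a⁻¹ * b := by
    rw [hg, X.smul, abs_of_pos (inv_pos.mpr hspos), hinv, ← hb]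
  have key : (↑r + 1 : ENNReal) ≤ X.ρ g := by
    rw [hXg]
    calc (↑r + 1 : ENNReal) = (↑r + 1) * (a⁻¹ * a) := by
          rw [ENNReal.inv_mul_cancel ha0 hat, mul_one]
      _ = a⁻¹ * ((↑r + 1) * a) := by ring
      _ ≤ a⁻¹ * b := mul_le_mul' le_rfl hu.le
  have heq : (fun x => E.indicator (fun _ => (1:ℝ)) x * g x) = g := by
    funext x
    by_cases hx : x ∈ E
    · simp [indicator_of_mem hx]
    · simp [hg, hv, indicator_of_notMem hx]
  have : (↑r : ENNReal) ≤ X.ρ (fun x => E.indicator (fun _ => (1:ℝ)) x * g x) := by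
    rw [heq]
    exact le_trans (by simp) key
  exact le_trans this (le_iSup₂_of_le g hYg.le le_rfl)
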